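/- arXiv:2511.20012 — 3 statements merged into one kernel-verified Lean document; each statement's English description precedes it below -/
import Mathlib

section
/- (Vanishing of H¹ of the adelic complex in the arithmetic case.) Let K be a number field. For every divisor D = Σ n_v[v] (a finitely supported ℤ-valued assignment on the finite places of K), one has 𝔸_K = K + 𝔸(D); that is, for every adele x ∈ 𝔸_K there exists q ∈ K such that v((x − q)_v) ≥ −n_v at every finite place v. Equivalently, the cohomology group H¹(𝒜(D)) = 𝔸_K/(K + 𝔸(D)) of the adelic complex K ⊕ 𝔸(D) → 𝔸_K, (a,b) ↦ a − b, vanishes for every divisor D. -/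
set_option synthInstance.maxHeartbeats 400000
set_option maxHeartbeats 1000000

open NumberField IsDedekindDomain

open IsDedekindDomain.HeightOneSpectrum in
private lemma approx_completion {K : Type*} [Field K] [NumberField K]
    (v : HeightOneSpectrum (𝓞 K)) (z : v.adicCompletion K)
    {γ : WithZero (Multiplicative ℤ)} (hγ : γ ≠ 0) :
    ∃ a : K, Valued.v (z - (algebraMap K (v.adicCompletion K) a)) ≤ γ := by
  letI : Valued K (WithZero (Multiplicative ℤ)) := v.adicValued
  have hd : DenseRange ((↑) : K → v.adicCompletion K) :=
    denseRange_algebraMap K v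
  have hU : {y : v.adicCompletion K | Valued.v (y - z) < Units.mk0 γ hγ} ∈ nhds z :=
    by
      letI : TopologicalSpace (WithZero (Multiplicative ℤ)) := WithZeroTopology.topologicalSpace
      have hc : Continuous (fun y : v.adicCompletion K => Valued.v (y - z)) :=
        (Valued.continuous_valuation_of_surjective
          (valuedAdicCompletion_surjective (K := K) (v := v))).comp
            (continuous_id.sub continuous_const)
      have h0 : Set.Iio γ ∈ nhds (Valued.v (z - z)) := by
        rw [sub_self, map_zero]; exact WithZeroTopology.Iio_mem_nhds_zero hγ
      exact hc.continuousAt.preimage_mem_nhds h0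
  obtain ⟨a, ha⟩ := hd.mem_nhds hU
  refine ⟨a, ?_⟩
  have : z - algebraMap K (v.adicCompletion K) a = -(((a : v.adicCompletion K)) - z) := by
    rw [algebraMap_adicCompletion, neg_sub]; rfl
  rw [this, Valuation.map_neg]
  exact le_of_lt ha

private lemma exists_nat_le {t : WithZero (Multiplicative ℤ)} (ht : t ≠ 0) :
    ∃ n : ℕ, (↑(Multiplicative.ofAdd (-(n : ℤ))) : WithZero (Multiplicative ℤ)) ≤ t := by
  obtain ⟨u, rfl⟩ := WithZero.ne_zero_iff_exists.mp ht
  refine ⟨(-u.toAdd).toNat, ?_⟩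
  rw [WithZero.coe_le_coe, ← Multiplicative.toAdd_le, toAdd_ofAdd]
  have := Int.self_le_toNat (-u.toAdd)
  omega

open IsDedekindDomain.HeightOneSpectrum

/-- (Vanishing of `H¹` of the adelic complex in the arithmetic case.)
For every number field `K` and every divisor `D = Σ n_v [v]` (a finitely supported `ℤ`-valued
assignment on the finite places of `K`), one has `𝔸_K = K + 𝔸(D)`: for every adele `x` there is
`q ∈ K` with `v((x - q)_v) ≥ -n_v` at every finite place `v`, i.e.
`H¹(𝒜(D)) = 𝔸_K/(K + 𝔸(D)) = 0`. -/
theorem adelic_H1_vanishes (K : Type*) [Field K] [NumberField K]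
    (D : HeightOneSpectrum (𝓞 K) →₀ ℤ) (x : AdeleRing (𝓞 K) K) :
    ∃ q : K, ∀ v : HeightOneSpectrum (𝓞 K),
      Valued.v ((x - algebraMap K (AdeleRing (𝓞 K) K) q).2 v) ≤
        (↑(Multiplicative.ofAdd (D v)) : WithZero (Multiplicative ℤ)) := by
  classical
  set y := x.2 with hy
  -- the bad set of y together with the support of D, as a finite set
  have hfin : ({v : HeightOneSpectrum (𝓞 K) | y.1 v ∉ v.adicCompletionIntegers K}
      ∪ ↑D.support).Finite :=
    (Filter.eventually_cofinite.mp y.2).union (D.support.finite_toSet)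
  set S : Finset (HeightOneSpectrum (𝓞 K)) := hfin.toFinset with hSdef
  -- approximate y at each place by an element of K
  choose a ha using fun v : HeightOneSpectrum (𝓞 K) =>
    approx_completion v (y.1 v)
      (γ := (↑(Multiplicative.ofAdd (D v)) : WithZero (Multiplicative ℤ)))
      WithZero.coe_ne_zero
  -- common denominator
  obtain ⟨d, hd⟩ := IsLocalization.exist_integer_multiples
    (nonZeroDivisors (𝓞 K)) S a
  have hd0 : (d : 𝓞 K) ≠ 0 := nonZeroDivisors.coe_ne_zero d
  set b : HeightOneSpectrum (𝓞 K) → 𝓞 K := fun v =>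
    if h : v ∈ S then (hd v h).choose else 0 with hbdef
  have hb : ∀ v ∈ S, algebraMap (𝓞 K) K (b v) = (d : 𝓞 K) • a v := by
    intro v hv
    simpa [hbdef, hv] using (hd v hv).choose_spec
  have hvd0 : ∀ v : HeightOneSpectrum (𝓞 K), v.intValuation (d : 𝓞 K) ≠ 0 :=
    fun v => (intValuation_ne_zero v _ hd0)
  -- places where d is not a unit
  have hTfin : ((S : Set (HeightOneSpectrum (𝓞 K))) ∪
      {v | v.asIdeal ∣ Ideal.span {(d : 𝓞 K)}}).Finite :=
    S.finite_toSet.union (Ideal.finite_factors (by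
      simpa [Ideal.span_singleton_eq_bot] using hd0))
  set T : Finset (HeightOneSpectrum (𝓞 K)) := hTfin.toFinset with hTdef
  have hST : S ⊆ T := fun v hv => hTfin.mem_toFinset.2 (Or.inl hv)
  have hdT : ∀ v ∉ T, v.intValuation (d : 𝓞 K) = 1 := by
    intro v hv
    have h1 : ¬ v.asIdeal ∣ Ideal.span {(d : 𝓞 K)} := fun h =>
      hv (hTfin.mem_toFinset.2 (Or.inr h))
    have h2 := (intValuation_lt_one_iff_dvd v (d : 𝓞 K)).not.mpr h1
    exact le_antisymm (intValuation_le_one v _) (not_lt.1 h2)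
  -- choose exponents
  have htarget : ∀ v : HeightOneSpectrum (𝓞 K),
      (min (↑(Multiplicative.ofAdd (D v)) : WithZero (Multiplicative ℤ)) 1)
        * v.intValuation (d : 𝓞 K) ≠ 0 := by
    intro v
    apply mul_ne_zero _ (hvd0 v)
    rcases le_total (↑(Multiplicative.ofAdd (D v)) : WithZero (Multiplicative ℤ)) 1 with h|h
    · rw [min_eq_left h]; exact WithZero.coe_ne_zero
    · rw [min_eq_right h]; exact one_ne_zero
  choose n hn using fun v => exists_nat_le (htarget v)
  -- CRT
  set b' : HeightOneSpectrum (𝓞 K) → 𝓞 K := fun v => if v ∈ S then b v else 0 with hb'def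
  obtain ⟨c, hc⟩ := IsDedekindDomain.exists_forall_sub_mem_ideal
    (s := T) (fun v : HeightOneSpectrum (𝓞 K) => v.asIdeal) n
    (fun v _ => v.prime)
    (fun i _ j _ hij h => hij (HeightOneSpectrum.ext h))
    (fun v => b' v)
  -- the global approximant
  refine ⟨algebraMap (𝓞 K) K c / algebraMap (𝓞 K) K (d : 𝓞 K), fun v => ?_⟩
  set q : K := algebraMap (𝓞 K) K c / algebraMap (𝓞 K) K (d : 𝓞 K) with hqdef
  -- valuation membership facts
  have hcm : ∀ v ∈ T,
      v.intValuation (c - b' v) ≤ (↑(Multiplicative.ofAdd (-(n v : ℤ))) :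
        WithZero (Multiplicative ℤ)) := by
    intro v hv
    rw [intValuation_apply]
    refine (intValuation_le_pow_iff_dvd v _ _).2 ?_
    rw [Ideal.dvd_span_singleton]
    exact hc v hv
  have hkey : (x - algebraMap K (AdeleRing (𝓞 K) K) q).2 v
      = y.1 v - algebraMap K (v.adicCompletion K) q := rfl
  rw [hkey]
  -- a helper for dividing inequalities
  have hdivle : ∀ (A B C : WithZero (Multiplicative ℤ)), C ≠ 0 → A ≤ B * C → A / C ≤ B := by
    intro A B C hC h
    rw [div_le_iff₀ (lt_of_le_of_ne (zero_le') (Ne.symm hC))]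
    exact h
  have hvalg : ∀ (w : HeightOneSpectrum (𝓞 K)) (k : K),
      Valued.v (algebraMap K (w.adicCompletion K) k) = w.valuation K k := by
    intro w k
    rw [show algebraMap K (w.adicCompletion K) k = (k : w.adicCompletion K) from
      congrFun (algebraMap_adicCompletion (𝓞 K) K w) k]
    exact valuedAdicCompletion_eq_valuation' w k
  -- valuation of q at v, in terms of integral valuations
  have hvq : ∀ w : HeightOneSpectrum (𝓞 K), w.valuation K q
      = w.intValuation c / w.intValuation (d : 𝓞 K) := by
    intro w
    rw [hqdef, map_div₀, valuation_of_algebraMap, valuation_of_algebraMap]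
  by_cases hvS : v ∈ S
  · -- the hard places
    have hb'v : b' v = b v := by simp [hb'def, hvS]
    have h2 : Valued.v (algebraMap K (v.adicCompletion K) (a v)
        - algebraMap K (v.adicCompletion K) q)
        ≤ (↑(Multiplicative.ofAdd (D v)) : WithZero (Multiplicative ℤ)) := by
      rw [← map_sub, hvalg]
      have hav : a v = algebraMap (𝓞 K) K (b v) / algebraMap (𝓞 K) K (d : 𝓞 K) := by
        rw [hb v hvS, Algebra.smul_def]
        field_simp
      have hsub : a v - q = algebraMap (𝓞 K) K (b v - c) / algebraMap (𝓞 K) K (d : 𝓞 K) := by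
        rw [hav, hqdef, map_sub, sub_div]
      rw [hsub, map_div₀, valuation_of_algebraMap, valuation_of_algebraMap]
      apply hdivle _ _ _ (hvd0 v)
      have e1 : v.intValuation (b v - c) = v.intValuation (c - b' v) := by
        rw [hb'v, show b v - c = -(c - b v) by ring, Valuation.map_neg]
      rw [e1]
      refine le_trans (hcm v (hST hvS)) (le_trans (hn v) ?_)
      exact mul_le_mul_left (min_le_left _ _) _
    have h3 := Valuation.map_add_le Valued.v (ha v) h2
    rwa [sub_add_sub_cancel] at h3
  · -- the easy places
    have hDv : D v = 0 := by
      by_contra h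
      exact hvS (hfin.mem_toFinset.2 (Or.inr (Finsupp.mem_support_iff.2 h)))
    have hy1 : Valued.v (y.1 v) ≤ 1 := by
      have : y.1 v ∈ v.adicCompletionIntegers K := by
        by_contra h
        exact hvS (hfin.mem_toFinset.2 (Or.inl h))
      exact this
    have hq1 : Valued.v (algebraMap K (v.adicCompletion K) q) ≤ 1 := by
      rw [hvalg, hvq v]
      apply hdivle _ _ _ (hvd0 v)
      rw [one_mul]
      by_cases hvT : v ∈ T
      · have hb'v : b' v = 0 := by simp [hb'def, hvS]
        have := hcm v hvT
        rw [hb'v, sub_zero] at this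
        refine le_trans this (le_trans (hn v) ?_)
        exact mul_le_mul_left (min_le_right _ _) _ |>.trans (by rw [one_mul])
      · rw [hdT v hvT]
        exact intValuation_le_one v c
    have hfinal := Valuation.map_sub_le Valued.v hy1 hq1
    refine le_trans hfinal ?_
    rw [hDv]
    simp
end

section
/- Let F be an infinite field and endow the field of formal Laurent series F((X)) with the topology induced by its X-adic valuation. Then no open subgroup of the additive group of F((X)) is compact; in particular, the ring of integers F⟦X⟧ is an open, non-compact subgroup. -/
open Topology Filter Multiplicative

local notation "ℤₘ₀" => WithZero (Multiplicative ℤ)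

open LaurentSeries HahnSeries Multiplicative in
/-- Auxiliary: in `ℤₘ₀`, strictly below `ofAdd (-n)` means at most `ofAdd (-(n+1))`. -/
lemma laurentSeries_aux_lt_le {n : ℤ} {a : ℤₘ₀}
    (ha : a < (Multiplicative.ofAdd (-n) : Multiplicative ℤ)) :
    a ≤ (Multiplicative.ofAdd (-(n + 1)) : Multiplicative ℤ) := by
  rcases eq_or_ne a 0 with rfl | h
  · exact zero_le'
  · obtain ⟨b, rfl⟩ := WithZero.ne_zero_iff_exists.mp h
    rw [WithZero.coe_lt_coe] at ha
    rw [WithZero.coe_le_coe]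
    have hb : Multiplicative.toAdd b < -n := Multiplicative.toAdd_lt.mpr ha
    have : Multiplicative.toAdd b ≤ -(n + 1) := by omega
    exact Multiplicative.toAdd_le.mp this

open LaurentSeries HahnSeries in
/-- Auxiliary: the valuation of `single n c` is at most `ofAdd (-n)`. -/
lemma laurentSeries_aux_val_single {F : Type*} [Field F] (n : ℤ) (c : F) :
    Valued.v (HahnSeries.single n c : LaurentSeries F) ≤
      (Multiplicative.ofAdd (-n) : Multiplicative ℤ) := by
  apply (LaurentSeries.valuation_le_iff_coeff_lt_eq_zero F).mpr
  intro k hk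
  exact HahnSeries.coeff_single_of_ne hk.ne

open LaurentSeries HahnSeries in
/-- No open additive subgroup of `F((X))` is compact, for `F` an infinite field. -/
lemma laurentSeries_open_subgroup_not_compact (F : Type*) [Field F] [Infinite F]
    (U : AddSubgroup (LaurentSeries F)) (hopen : IsOpen (U : Set (LaurentSeries F))) :
    ¬IsCompact (U : Set (LaurentSeries F)) := by
  intro hcomp
  have h0 : (U : Set (LaurentSeries F)) ∈ 𝓝 (0 : LaurentSeries F) :=
    hopen.mem_nhds U.zero_mem
  obtain ⟨γ0, hγ0⟩ := Valued.mem_nhds_zero.mp h0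
  set γ : ℤₘ₀ˣ := Units.mk0 (MonoidWithZeroHom.ValueGroup₀.embedding γ0.1) (fun h =>
    γ0.ne_zero (MonoidWithZeroHom.ValueGroup₀.embedding_injective (h.trans (map_zero _).symm)))
  have hγ : {x : LaurentSeries F | Valued.v x < (γ : ℤₘ₀)} ⊆ (U : Set (LaurentSeries F)) :=
    fun x hx => hγ0 ((Valuation.restrict_lt_iff_lt_embedding (v := Valued.v)).mpr hx)
  obtain ⟨m, hm⟩ := WithZero.ne_zero_iff_exists.mp γ.ne_zero
  set n : ℤ := 1 - Multiplicative.toAdd m with hn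
  have hlt : ((Multiplicative.ofAdd (-n) : Multiplicative ℤ) : ℤₘ₀) < (γ : ℤₘ₀) := by
    rw [← hm, WithZero.coe_lt_coe]
    have : -n < Multiplicative.toAdd m := by omega
    exact Multiplicative.toAdd_lt.mp this
  set S : Set (LaurentSeries F) :=
    Set.range (fun c : F => (HahnSeries.single n c : LaurentSeries F)) with hS
  have hSU : S ⊆ (U : Set (LaurentSeries F)) := by
    rintro _ ⟨c, rfl⟩
    exact hγ (lt_of_le_of_lt (laurentSeries_aux_val_single n c) hlt)
  have hSinf : S.Infinite :=
    Set.infinite_range_of_injective (HahnSeries.single_injective n)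
  obtain ⟨x, _, hacc⟩ := hSinf.exists_accPt_of_subset_isCompact hcomp hSU
  -- The ball of radius `ofAdd (-n)` around `x` meets `S` in at most one point.
  set V : Set (LaurentSeries F) :=
    {y | Valued.v (y - x) < ((Multiplicative.ofAdd (-n) : Multiplicative ℤ) : ℤₘ₀)} with hV
  have hVnhds : V ∈ 𝓝 x := by
    rw [Valued.mem_nhds]
    exact ⟨Units.mk0 (Valued.v.restrict (HahnSeries.single n (1 : F) : LaurentSeries F))
      (by simp [valuation_single_zpow]), fun y hy => by
        have := (Valuation.restrict_lt_iff (v := Valued.v)).mp hy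
        rw [valuation_single_zpow] at this
        exact this⟩
  have hone : ∀ y ∈ V ∩ S, y = HahnSeries.single n (x.coeff n) := by
    rintro y ⟨hyV, c, rfl⟩
    have hle : Valued.v ((HahnSeries.single n c : LaurentSeries F) - x) ≤
        (Multiplicative.ofAdd (-(n + 1)) : Multiplicative ℤ) :=
      laurentSeries_aux_lt_le hyV
    have := LaurentSeries.eq_coeff_of_valuation_sub_lt F hle (n := n) (by omega)
    rw [HahnSeries.coeff_single_same] at this
    rw [this]
  obtain ⟨y, ⟨hyV, hyS⟩, hyx⟩ := (accPt_iff_nhds (x := x) (C := S)).mp hacc V hVnhds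
  have hVy : V ∩ {y}ᶜ ∈ 𝓝 x :=
    Filter.inter_mem hVnhds (isOpen_compl_singleton.mem_nhds (Ne.symm hyx))
  obtain ⟨z, ⟨⟨hzV, hzy⟩, hzS⟩, _⟩ := (accPt_iff_nhds (x := x) (C := S)).mp hacc _ hVy
  exact hzy (by rw [Set.mem_compl_iff, Set.mem_singleton_iff] at *; rw [hone z ⟨hzV, hzS⟩, hone y ⟨hyV, hyS⟩])

/-- Let `F` be an infinite field and endow `F((X))` with the topology induced
by its `X`-adic valuation. Then no open subgroup of the additive group of `F((X))` is compact;
in particular, the ring of integers `F⟦X⟧ = {x | v(x) ≤ 1}` is an open, non-compact subgroup. -/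
theorem laurentSeries_no_compact_open_subgroup (F : Type*) [Field F] [Infinite F] :
    (∀ U : AddSubgroup (LaurentSeries F), IsOpen (U : Set (LaurentSeries F)) →
      ¬IsCompact (U : Set (LaurentSeries F))) ∧
    IsOpen {x : LaurentSeries F | Valued.v x ≤ 1} ∧
    ¬IsCompact {x : LaurentSeries F | Valued.v x ≤ 1} := by
  have hopen : IsOpen {x : LaurentSeries F | Valued.v x ≤ 1} :=
    Valued.isOpen_integer (LaurentSeries F)
  refine ⟨laurentSeries_open_subgroup_not_compact F, hopen, ?_⟩
  let U : AddSubgroup (LaurentSeries F) :=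
    { carrier := {x : LaurentSeries F | Valued.v x ≤ 1}
      zero_mem' := by simp
      add_mem' := fun {a b} ha hb => le_trans (Valued.v.map_add a b) (max_le ha hb)
      neg_mem' := fun {a} ha => by simpa using ha }
  exact laurentSeries_open_subgroup_not_compact F U hopen
end

section
/- Let F be an infinite field and endow the field of formal Laurent series F((X)) with the topology induced by its X-adic valuation. Then F((X)) is not a locally compact topological space. -/
open LaurentSeries Multiplicative WithZero

private theorem valuation_single_aux (F : Type*) [Field F] (m : ℤ) {c : F} (hc : c ≠ 0) :
    Valued.v (HahnSeries.single m c : LaurentSeries F) =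
      (Multiplicative.ofAdd (-m) : Multiplicative ℤ) := by
  have h1 : (HahnSeries.single m c : LaurentSeries F) =
      HahnSeries.single (0 : ℤ) c * HahnSeries.single m 1 := by
    rw [HahnSeries.single_mul_single, zero_add, mul_one]
  have hunit : (HahnSeries.single (0 : ℤ) c : LaurentSeries F) *
      HahnSeries.single (0 : ℤ) c⁻¹ = 1 := by
    rw [HahnSeries.single_mul_single, zero_add, mul_inv_cancel₀ hc, HahnSeries.single_zero_one]
  have hle : ∀ d : F, Valued.v (HahnSeries.single (0 : ℤ) d : LaurentSeries F) ≤ 1 := by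
    intro d
    have := (LaurentSeries.valuation_le_iff_coeff_lt_eq_zero (D := 0)
      (f := (HahnSeries.single (0 : ℤ) d : LaurentSeries F)) F).mpr ?_
    · simpa using this
    · intro n hn
      rw [HahnSeries.coeff_single_of_ne (by omega)]
  have hmul : Valued.v (HahnSeries.single (0 : ℤ) c : LaurentSeries F) *
      Valued.v (HahnSeries.single (0 : ℤ) c⁻¹ : LaurentSeries F) = 1 := by
    rw [← Valuation.map_mul, hunit, Valuation.map_one]
  have h2 : Valued.v (HahnSeries.single (0 : ℤ) c : LaurentSeries F) = 1 := by
    refine le_antisymm (hle c) ?_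
    have : (1 : ℤᵐ⁰) ≤ Valued.v (HahnSeries.single (0 : ℤ) c : LaurentSeries F) * 1 :=
      hmul ▸ mul_le_mul_right (hle c⁻¹) (Valued.v (HahnSeries.single (0 : ℤ) c : LaurentSeries F))
    simpa using this
  rw [h1, Valuation.map_mul, h2, one_mul, LaurentSeries.valuation_single_zpow, WithZero.exp_eq_coe_ofAdd]

/-- Let `F` be an infinite field and endow `F((X))` with the topology induced
by its `X`-adic valuation. Then `F((X))` is not a locally compact topological space. -/
theorem laurentSeries_not_locallyCompact (F : Type*) [Field F] [Infinite F] :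
    ¬LocallyCompactSpace (LaurentSeries F) := by
  intro h
  obtain ⟨K, hKc, hKn⟩ := exists_compact_mem_nhds (0 : LaurentSeries F)
  obtain ⟨γ0, hγ0⟩ := Valued.mem_nhds_zero.mp hKn
  have hγ0ne : MonoidWithZeroHom.ValueGroup₀.embedding γ0.1 ≠ 0 := fun h0 => γ0.ne_zero
    (MonoidWithZeroHom.ValueGroup₀.embedding_injective (h0.trans (map_zero _).symm))
  obtain ⟨γ, hγ⟩ : ∃ γ : (ℤᵐ⁰)ˣ, {x : LaurentSeries F | Valued.v x < (γ : ℤᵐ⁰)} ⊆ K :=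
    ⟨Units.mk0 _ hγ0ne, fun x hx => hγ0 ((Valuation.restrict_lt_iff_lt_embedding _).mpr hx)⟩
  -- pick `m` with `ofAdd (-m) < γ`
  obtain ⟨a, ha⟩ := WithZero.ne_zero_iff_exists.mp γ.ne_zero
  set m : ℤ := 1 - a.toAdd with hm
  have hlt : ((Multiplicative.ofAdd (-m) : Multiplicative ℤ) : ℤᵐ⁰) < (γ : ℤᵐ⁰) := by
    rw [← ha, WithZero.coe_lt_coe, ← ofAdd_toAdd a, Multiplicative.ofAdd_lt]
    omega
  -- the points `single m c`
  set s : F → LaurentSeries F := fun c => HahnSeries.single m c with hs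
  have hsK : ∀ c : F, s c ∈ K := by
    intro c
    apply hγ
    rcases eq_or_ne c 0 with rfl | hc
    · simpa [hs] using (zero_lt_iff.mpr γ.ne_zero : (0 : ℤᵐ⁰) < γ)
    · simpa [hs, valuation_single_aux F m hc] using hlt
  -- open cover of `K` by small balls
  set O : LaurentSeries F → Set (LaurentSeries F) :=
    fun y => {x | Valued.v (x - y) < ((Multiplicative.ofAdd (-m) : Multiplicative ℤ) : ℤᵐ⁰)}
    with hO
  have hOopen : ∀ y, IsOpen (O y) := by
    intro y
    rw [isOpen_iff_mem_nhds]
    intro x hx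
    rw [Valued.mem_nhds]
    refine ⟨Units.mk0 (Valued.v.restrict (HahnSeries.single m (1 : F) : LaurentSeries F))
      (by simp [Valuation.restrict_eq_zero_iff]), fun z hz => ?_⟩
    have : z - y = (z - x) + (x - y) := by ring
    calc Valued.v (z - y) ≤ max (Valued.v (z - x)) (Valued.v (x - y)) := by
          rw [this]; exact Valuation.map_add _ _ _
      _ < _ := max_lt (by simpa [LaurentSeries.valuation_single_zpow, WithZero.exp_eq_coe_ofAdd] using (Valuation.restrict_lt_iff _).mp hz) hx
  obtain ⟨t, ht⟩ := hKc.elim_finite_subcover O hOopen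
    (fun x hx => Set.mem_iUnion.mpr ⟨x, by simp [hO, γ.ne_zero, zero_lt_iff]⟩)
  -- build an injection from `F` into the finite set `t`
  have hinj : ∀ c : F, ∃ y ∈ t, s c ∈ O y := by
    intro c
    have := ht (hsK c)
    simpa using this
  choose f hf1 hf2 using hinj
  have hfinj : Function.Injective f := by
    intro c₁ c₂ hcc
    by_contra hne
    have h1 := hf2 c₁
    have h2 := hf2 c₂
    rw [hcc] at h1
    have hsub : s c₁ - s c₂ = HahnSeries.single m (c₁ - c₂) := by
      ext n
      simp only [hs, HahnSeries.coeff_sub, HahnSeries.coeff_single, Pi.sub_apply]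
      split_ifs <;> simp
    have hv : Valued.v (s c₁ - s c₂) =
        ((Multiplicative.ofAdd (-m) : Multiplicative ℤ) : ℤᵐ⁰) := by
      rw [hsub, valuation_single_aux F m (sub_ne_zero.mpr hne)]
    have : Valued.v (s c₁ - s c₂) < ((Multiplicative.ofAdd (-m) : Multiplicative ℤ) : ℤᵐ⁰) := by
      have hdecomp : s c₁ - s c₂ = (s c₁ - f c₂) + (f c₂ - s c₂) := by ring
      calc Valued.v (s c₁ - s c₂)
          ≤ max (Valued.v (s c₁ - f c₂)) (Valued.v (f c₂ - s c₂)) := by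
            rw [hdecomp]; exact Valuation.map_add _ _ _
        _ < _ := by
            refine max_lt h1 ?_
            have := h2
            rw [hO] at this
            simpa [← Valuation.map_neg (Valued.v) (s c₂ - f c₂), neg_sub] using this
    exact absurd hv (ne_of_lt this)
  haveI : Finite F := Finite.of_injective (fun c => (⟨f c, hf1 c⟩ : {y // y ∈ t}))
    fun c₁ c₂ h => hfinj (congrArg Subtype.val h)
  exact not_finite F
end
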